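/- Let T = ℝ^k/ℤ^k act on ℂ^n through a homomorphism given by an integer matrix, producing a Delzant space with labelled polyhedron (S, P). For open faces F₁ ⪯ F₂ of P, the excess functions satisfy e_{S|_{F₁}}(F₂) = e_S(F₂) + l, where l is the number of labels in S_{F₁}. Consequently, if the excess function e_S is constant on P, then e_{S|_F} is constant on the closure of F for every open face F. -/
import Mathlib


open scoped Classical

/-- Let `(S, P)` be a labelled polyhedron for a `k`-torus, with labels
`(v i, r i)` and polyhedron `P = {μ | ⟨μ, v i⟩ ≥ r i ∀ i}`; parametrize the open faces of
`P` by the sets of tight labels: `Face I` is the set of `μ` with `⟨μ, v i⟩ = r i` for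
`i ∈ I` and `⟨μ, v i⟩ > r i` for `i ∉ I`.  Let `tight F` be the set of labels whose
hyperplane contains `F`, `e_S(F) = #(tight F) − codim F` the excess, and `e_{S|F₁}` the
excess function for the label set `S|_{F₁} = S ∪ {(−v i, −r i) : i ∈ S_{F₁}}`.  Then for
open faces `F₂ ⪯ F₁` (i.e. `I₁ ⊆ I₂`), one has `e_{S|F₁}(F₂) = e_S(F₂) + #S_{F₁}`.
Consequently, if `e_S` is constant on `P`, then `e_{S|F₁}` is constant on the closure of
`F₁`. -/
theorem excess_of_restricted_labels
    (k n : ℕ) (v : Fin n → Fin k → ℤ) (hv : ∀ i, v i ≠ 0) (r : Fin n → ℝ)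
    (Face : Finset (Fin n) → Set (Fin k → ℝ))
    (hFace : ∀ I, Face I = {μ : Fin k → ℝ |
        (∀ i ∈ I, ∑ j, μ j * (v i j : ℝ) = r i) ∧
        (∀ i ∉ I, r i < ∑ j, μ j * (v i j : ℝ))})
    (tight : Set (Fin k → ℝ) → Finset (Fin n))
    (htight : ∀ F, tight F =
        Finset.univ.filter (fun i => ∀ μ ∈ F, ∑ j, μ j * (v i j : ℝ) = r i))
    (dimF : Set (Fin k → ℝ) → ℕ)
    (hdimF : ∀ F, dimF F = Module.finrank ℝ ↥((affineSpan ℝ F).direction))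
    (eS : Set (Fin k → ℝ) → ℤ)
    (heS : ∀ F, eS F = ((tight F).card : ℤ) - ((k : ℤ) - (dimF F : ℤ)))
    (I₁ : Finset (Fin n)) (h₁ : (Face I₁).Nonempty)
    (eS' : Set (Fin k → ℝ) → ℤ)
    -- excess with respect to the label set S|_{F₁}: the labels of S together with the
    -- reversed labels (−v i, −r i) for i ∈ S_{F₁} = tight (Face I₁)
    (heS' : ∀ F, eS' F =
        (((tight F).card : ℤ) +
          (((tight (Face I₁)).filter
              (fun i => ∀ μ ∈ F, ∑ j, μ j * (v i j : ℝ) = r i)).card : ℤ))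
          - ((k : ℤ) - (dimF F : ℤ))) :
    (∀ I₂ : Finset (Fin n), I₁ ⊆ I₂ → (Face I₂).Nonempty →
        eS' (Face I₂) = eS (Face I₂) + ((tight (Face I₁)).card : ℤ))
    ∧ ((∀ I I' : Finset (Fin n), (Face I).Nonempty → (Face I').Nonempty →
          eS (Face I) = eS (Face I')) →
        ∀ I I' : Finset (Fin n), I₁ ⊆ I → I₁ ⊆ I' →
          (Face I).Nonempty → (Face I').Nonempty →
          eS' (Face I) = eS' (Face I')) := by
  obtain ⟨μ₁, hμ₁⟩ := h₁
  rw [hFace I₁] at hμ₁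
  have key : ∀ I₂ : Finset (Fin n), I₁ ⊆ I₂ →
      ((tight (Face I₁)).filter
        (fun i => ∀ μ ∈ Face I₂, ∑ j, μ j * (v i j : ℝ) = r i)) = tight (Face I₁) := by
    intro I₂ hsub
    apply Finset.filter_true_of_mem
    intro i hi
    have hiI₁ : i ∈ I₁ := by
      by_contra hni
      have h1 : r i < ∑ j, μ₁ j * (v i j : ℝ) := hμ₁.2 i hni
      rw [htight] at hi
      have := (Finset.mem_filter.mp hi).2 μ₁ (by rw [hFace]; exact hμ₁)
      linarith
    intro μ hμ
    rw [hFace I₂] at hμ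
    exact hμ.1 i (hsub hiI₁)
  have main : ∀ I₂ : Finset (Fin n), I₁ ⊆ I₂ → (Face I₂).Nonempty →
      eS' (Face I₂) = eS (Face I₂) + ((tight (Face I₁)).card : ℤ) := by
    intro I₂ hsub _
    rw [heS', heS, key I₂ hsub]
    ring
  exact ⟨main, fun hconst I I' hI hI' hne hne' => by
    rw [main I hI hne, main I' hI' hne', hconst I I' hne hne']⟩
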